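/- (DDOT sample complexity.) Fix N qubits, a locality parameter k ≤ N, and a global reference string ỹ ∈ {0,1}^N. Let M = (M_x)_{x∈{0,1}^N} be a POVM on (ℂ²)^{⊗N}. Draw N_Mes i.i.d. strings y¹,…,y^{N_Mes} uniformly from {0,1}^N (computational basis inputs); given yⁱ, draw the outcome xⁱ ∈ {0,1}^N with probability tr(M_{xⁱ} |yⁱ⟩⟨yⁱ|). For a subset A of size k, strings x_A ∈ {0,1}^k and y_A = ỹ|_A, let h = #{i : yⁱ|_A = y_A} and, when h > 0, define M̂^A_{x_A,y_A} = (1/h)·#{i : yⁱ|_A = y_A and xⁱ|_A = x_A}. Then the probability that there exist a subset A of size k and x_A ∈ {0,1}^k with |M̂^A_{x_A,ỹ|_A} − M^A_{x_A,ỹ|_A}| ≥ ε is at most 2 · 2^k · C(N,k) · exp(−(1 − e^{−2ε²}) N_Mes / 2^k). In particular, N_Mes ≥ (2^k/(1 − e^{−2ε²}))·[(k+1)·log 2 + log C(N,k) + log(1/δ)] circuits suffice for accuracy ε with probability at least 1 − δ. -/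

import Mathlib

open scoped BigOperators ComplexOrder

/-- Restriction of a string on `N` qubits to a subset `A`. -/
def res {N : ℕ} {γ : Type*} (A : Finset (Fin N)) (x : Fin N → γ) : {j // j ∈ A} → γ :=
  fun j => x j.1

/-- Merge of a bit-string on a subset `A` with a bit-string on its complement. -/
def mer {N : ℕ} (A : Finset (Fin N)) (a : {j // j ∈ A} → Fin 2)
    (b : {j // j ∉ A} → Fin 2) : Fin N → Fin 2 :=
  fun j => if h : j ∈ A then a ⟨j, h⟩ else b ⟨j, h⟩

/-- The `N`-qubit computational basis state `|y⟩` for `y ∈ {0,1}^N`. -/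
noncomputable def cState {N : ℕ} (y : Fin N → Fin 2) : (Fin N → Fin 2) → ℂ :=
  fun x => if x = y then 1 else 0

/-- Born-rule probability `tr(M_x |y⟩⟨y|)` of outcome `x` on computational input `|y⟩`. -/
noncomputable def bornC {N : ℕ}
    (M : (Fin N → Fin 2) → Matrix (Fin N → Fin 2) (Fin N → Fin 2) ℂ)
    (y : Fin N → Fin 2) (x : Fin N → Fin 2) : ℝ :=
  (dotProduct (star (cState y)) ((M x).mulVec (cState y))).re

/-- The reduced POVM effect
`M^A_{x_A} = ∑_{x_Ā} tr_Ā (M_{x_A x_Ā} (1_A ⊗ 1_Ā / 2^(N-k)))` on the qubits of `A`. -/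
noncomputable def redEff {N : ℕ}
    (M : (Fin N → Fin 2) → Matrix (Fin N → Fin 2) (Fin N → Fin 2) ℂ)
    (A : Finset (Fin N)) (xA : {j // j ∈ A} → Fin 2) :
    Matrix ({j // j ∈ A} → Fin 2) ({j // j ∈ A} → Fin 2) ℂ :=
  Matrix.of fun a a' =>
    (1 / (2 : ℂ) ^ (N - A.card)) *
      ∑ xb : {j // j ∉ A} → Fin 2, ∑ b : {j // j ∉ A} → Fin 2,
        M (mer A xA xb) (mer A a b) (mer A a' b)

/-- The computational basis state `|y_A⟩` on the qubits of `A`. -/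
noncomputable def cStateA {N : ℕ} (A : Finset (Fin N)) (yA : {j // j ∈ A} → Fin 2) :
    ({j // j ∈ A} → Fin 2) → ℂ :=
  fun a => if a = yA then 1 else 0

/-- The reduced matrix element `M^A_{x_A,y_A} = tr(|x_A⟩⟨x_A| M^A(|y_A⟩⟨y_A|))`. -/
noncomputable def redElemC {N : ℕ}
    (M : (Fin N → Fin 2) → Matrix (Fin N → Fin 2) (Fin N → Fin 2) ℂ)
    (A : Finset (Fin N)) (xA : {j // j ∈ A} → Fin 2) (yA : {j // j ∈ A} → Fin 2) : ℝ :=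
  (dotProduct (star (cStateA A yA)) ((redEff M A xA).mulVec (cStateA A yA))).re

/-- The DDOT estimator `M̂^A_{x_A,y_A}`: the fraction, among the samples whose input string
restricted to `A` equals `y_A`, of those whose outcome restricted to `A` equals `x_A`. -/
noncomputable def estimC {N NMes : ℕ} (A : Finset (Fin N)) (xA : {j // j ∈ A} → Fin 2)
    (yA : {j // j ∈ A} → Fin 2)
    (ω : Fin NMes → (Fin N → Fin 2) × (Fin N → Fin 2)) : ℝ :=
  ((Finset.univ.filter fun i => res A (ω i).1 = yA ∧ res A (ω i).2 = xA).card : ℝ) /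
    ((Finset.univ.filter fun i => res A (ω i).1 = yA).card : ℝ)

/-- Probability weight of a sample sequence: each input string drawn uniformly from
`{0,1}^N`, each outcome drawn from the Born rule. -/
noncomputable def wgtC {N NMes : ℕ}
    (M : (Fin N → Fin 2) → Matrix (Fin N → Fin 2) (Fin N → Fin 2) ℂ)
    (ω : Fin NMes → (Fin N → Fin 2) × (Fin N → Fin 2)) : ℝ :=
  ∏ i, (1 / (2 : ℝ) ^ N) * bornC M (ω i).1 (ω i).2

open scoped Classical in
/-- Probability that for some subset `A` of size `k` and some outcome `x_A` the DDOT
estimator deviates from the reduced matrix element by at least `ε`. -/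
noncomputable def badProbC (N k NMes : ℕ)
    (M : (Fin N → Fin 2) → Matrix (Fin N → Fin 2) (Fin N → Fin 2) ℂ)
    (ytilde : Fin N → Fin 2) (ε : ℝ) : ℝ :=
  ∑ ω ∈ Finset.univ.filter
      (fun ω : Fin NMes → (Fin N → Fin 2) × (Fin N → Fin 2) =>
        ∃ A : Finset (Fin N), A.card = k ∧ ∃ xA : {j // j ∈ A} → Fin 2,
          |estimC A xA (res A ytilde) ω - redElemC M A xA (res A ytilde)| ≥ ε),
    wgtC M ω

section AuxProofs
open Real Finset


lemma Dpos {q : ℝ} (h0 : 0 ≤ q) (h1 : q ≤ 1) (x : ℝ) : 0 < 1 - q + q * exp x := by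
  rcases eq_or_lt_of_le h1 with h | h
  · subst h; simpa using exp_pos x
  · nlinarith [exp_pos x, mul_nonneg h0 (exp_pos x).le]

lemma bern_mgf_le (q : ℝ) (h0 : 0 ≤ q) (h1 : q ≤ 1) (l : ℝ) :
    q * exp (l * (1 - q)) + (1 - q) * exp (-(l * q)) ≤ exp (l ^ 2 / 8) := by
  set D : ℝ → ℝ := fun x => 1 - q + q * exp x with hD
  have hDpos : ∀ x, 0 < D x := fun x => Dpos h0 h1 x
  set ψ : ℝ → ℝ := fun x => x ^ 2 / 8 - (Real.log (D x) - x * q) with hψ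
  set ψ' : ℝ → ℝ := fun x => x / 4 - q * exp x / D x + q with hψ'
  have hDder : ∀ x, HasDerivAt D (q * exp x) x := by
    intro x
    exact ((Real.hasDerivAt_exp x).const_mul q).const_add (1 - q)
  have hψder : ∀ x, HasDerivAt ψ (ψ' x) x := by
    intro x
    have h1' : HasDerivAt (fun x => Real.log (D x) - x * q)
        (q * exp x / D x - q) x := by
      have := (hDder x).log (hDpos x).ne'
      have h := this.sub ((hasDerivAt_id' x).mul_const q)
      simp only [one_mul] at h
      exact h
    have h2 : HasDerivAt (fun x : ℝ => x ^ 2 / 8) (x / 4) x := by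
      have := (hasDerivAt_pow 2 x).div_const 8
      exact this.congr_deriv (by norm_num; ring)
    have h3 := h2.sub h1'
    exact h3.congr_deriv (by simp only [hψ']; ring)
  have hψ'der : ∀ x, HasDerivAt ψ'
      (1 / 4 - (q * exp x * D x - q * exp x * (q * exp x)) / (D x) ^ 2) x := by
    intro x
    have hdiv : HasDerivAt (fun x => q * exp x / D x)
        ((q * exp x * D x - q * exp x * (q * exp x)) / (D x) ^ 2) x :=
      ((Real.hasDerivAt_exp x).const_mul q).div (hDder x) (hDpos x).ne'
    have h2 : HasDerivAt (fun x : ℝ => x / 4) (1 / 4) x := by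
      simpa using (hasDerivAt_id x).div_const 4
    exact (h2.sub hdiv).add_const q
  have hψ'nonneg : ∀ x, 0 ≤ 1 / 4 - (q * exp x * D x - q * exp x * (q * exp x)) / (D x) ^ 2 := by
    intro x
    rw [sub_nonneg, div_le_iff₀ (pow_pos (hDpos x) 2)]
    have hDx : D x = 1 - q + q * exp x := rfl
    nlinarith [sq_nonneg (1 - q - q * exp x), exp_pos x, mul_nonneg h0 (exp_pos x).le]
  have hψ'mono : Monotone ψ' :=
    monotone_of_deriv_nonneg (fun x => (hψ'der x).differentiableAt)
      (fun x => by rw [(hψ'der x).deriv]; exact hψ'nonneg x)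
  have hψ'0 : ψ' 0 = 0 := by simp [hψ', hD]
  have hψdiff : Differentiable ℝ ψ := fun x => (hψder x).differentiableAt
  have hψ0 : ψ 0 = 0 := by simp [hψ, hD]
  have hψnonneg : ∀ x, 0 ≤ ψ x := by
    intro x
    rcases le_total 0 x with hx | hx
    · have hmono : MonotoneOn ψ (Set.Ici 0) := by
        apply monotoneOn_of_deriv_nonneg (convex_Ici 0) hψdiff.continuous.continuousOn
          hψdiff.differentiableOn
        intro y hy
        rw [(hψder y).deriv, ← hψ'0]
        exact hψ'mono (le_of_lt (by simpa using hy))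
      have := hmono (Set.self_mem_Ici) hx hx
      rwa [hψ0] at this
    · have hanti : AntitoneOn ψ (Set.Iic 0) := by
        apply antitoneOn_of_deriv_nonpos (convex_Iic 0) hψdiff.continuous.continuousOn
          hψdiff.differentiableOn
        intro y hy
        rw [(hψder y).deriv, ← hψ'0]
        exact hψ'mono (le_of_lt (by simpa using hy))
      have := hanti hx (Set.self_mem_Iic) hx
      rwa [hψ0] at this
  have key : Real.log (D l) - l * q ≤ l ^ 2 / 8 := by
    have := hψnonneg l
    simp only [hψ] at this
    linarith
  have lhs_eq : q * exp (l * (1 - q)) + (1 - q) * exp (-(l * q))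
      = exp (Real.log (D l) - l * q) := by
    rw [Real.exp_sub, Real.exp_log (hDpos l)]
    rw [show l * (1 - q) = l - l * q by ring, Real.exp_sub, Real.exp_neg]
    field_simp [hD]
    ring
  rw [lhs_eq]
  exact Real.exp_le_exp.mpr key



lemma sum_pi_prod {Ω₀ : Type*} [Fintype Ω₀] [DecidableEq Ω₀] (n : ℕ) (g : Ω₀ → ℝ) :
    ∑ ω : Fin n → Ω₀, ∏ i, g (ω i) = (∑ s, g s) ^ n := by
  classical
  rw [← Fintype.piFinset_univ, ← Finset.prod_univ_sum (fun _ => Finset.univ) (fun _ s => g s)]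
  simp

lemma core_bound {Ω₀ : Type*} [Fintype Ω₀] [DecidableEq Ω₀] (P : Ω₀ → ℝ) (hP : ∀ s, 0 ≤ P s)
    (hit mat : Ω₀ → Prop) [DecidablePred hit] [DecidablePred mat]
    (p q ε : ℝ) (hε : 0 < ε) (hp0 : 0 ≤ p)
    (hsum1 : ∑ s, P s = 1)
    (hp : ∑ s ∈ Finset.univ.filter hit, P s = p)
    (hq : ∑ s ∈ Finset.univ.filter (fun s => hit s ∧ mat s), P s = p * q)
    (hq0 : 0 ≤ q) (hq1 : q ≤ 1) (n : ℕ)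
    (bad : (Fin n → Ω₀) → Prop) [DecidablePred bad]
    (hbad : ∀ ω, bad ω → ε ≤
      |((Finset.univ.filter fun i => hit (ω i) ∧ mat (ω i)).card : ℝ) /
        ((Finset.univ.filter fun i => hit (ω i)).card : ℝ) - q|) :
    ∑ ω ∈ Finset.univ.filter bad, ∏ i, P (ω i) ≤
      2 * (1 - p * (1 - Real.exp (-2 * ε ^ 2))) ^ n := by
  classical
  set l : ℝ := 4 * ε with hl
  set c : ℝ := Real.exp (-2 * ε ^ 2) with hc
  set g₁ : Ω₀ → ℝ := fun s =>
    Real.exp (l * ((if hit s ∧ mat s then 1 else 0) - (q + ε) * (if hit s then 1 else 0)))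
    with hg₁
  set g₂ : Ω₀ → ℝ := fun s =>
    Real.exp (l * ((q - ε) * (if hit s then 1 else 0) - (if hit s ∧ mat s then 1 else 0)))
    with hg₂
  -- products of g over samples
  have prod_g₁ : ∀ ω : Fin n → Ω₀, ∏ i, g₁ (ω i) =
      Real.exp (l * (((Finset.univ.filter fun i => hit (ω i) ∧ mat (ω i)).card : ℝ) -
        (q + ε) * ((Finset.univ.filter fun i => hit (ω i)).card : ℝ))) := by
    intro ω
    rw [← Real.exp_sum]
    congr 1
    rw [← Finset.sum_boole (fun i => hit (ω i) ∧ mat (ω i)) Finset.univ,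
      ← Finset.sum_boole (fun i => hit (ω i)) Finset.univ]
    simp only [Finset.mul_sum, mul_sub, Finset.sum_sub_distrib]
  have prod_g₂ : ∀ ω : Fin n → Ω₀, ∏ i, g₂ (ω i) =
      Real.exp (l * ((q - ε) * ((Finset.univ.filter fun i => hit (ω i)).card : ℝ) -
        ((Finset.univ.filter fun i => hit (ω i) ∧ mat (ω i)).card : ℝ))) := by
    intro ω
    rw [← Real.exp_sum]
    congr 1
    rw [← Finset.sum_boole (fun i => hit (ω i) ∧ mat (ω i)) Finset.univ,
      ← Finset.sum_boole (fun i => hit (ω i)) Finset.univ]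
    simp only [Finset.mul_sum, mul_sub, Finset.sum_sub_distrib]
  -- Step A: pointwise Chernoff bound
  have stepA : ∀ ω, bad ω → 1 ≤ ∏ i, g₁ (ω i) + ∏ i, g₂ (ω i) := by
    intro ω hω
    set m : ℕ := (Finset.univ.filter fun i => hit (ω i) ∧ mat (ω i)).card with hm
    set h : ℕ := (Finset.univ.filter fun i => hit (ω i)).card with hh
    have hmh : m ≤ h := Finset.card_le_card (by
      intro i hi
      simp only [Finset.mem_filter] at hi ⊢
      exact ⟨hi.1, hi.2.1⟩)
    have habs := hbad ω hω
    rw [prod_g₁, prod_g₂]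
    rcases Nat.eq_zero_or_pos h with h0 | hpos
    · have m0 : m = 0 := Nat.le_zero.mp (h0 ▸ hmh)
      rw [← hm, ← hh, h0, m0]
      have := (Real.exp_pos (l * ((q - ε) * ((0:ℕ):ℝ) - ((0:ℕ):ℝ)))).le
      simp only [Nat.cast_zero, mul_zero, zero_sub, sub_zero, neg_zero, zero_mul, sub_self,
        Real.exp_zero] at *
      linarith [(Real.exp_pos (l * 0)).le, Real.exp_pos (l * -0)]
    · have hhR : (0:ℝ) < (h:ℝ) := by exact_mod_cast hpos
      rcases le_abs.mp habs with hup | hdn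
      · -- upper tail : m/h - q ≥ ε
        have hnn : (m:ℝ) - (q + ε) * (h:ℝ) ≥ 0 := by
          have := (le_div_iff₀ hhR).mp (by linarith : q + ε ≤ (m:ℝ)/(h:ℝ))
          linarith
        have h2 : (1:ℝ) ≤ Real.exp (l * ((m:ℝ) - (q + ε) * (h:ℝ))) := by
          rw [← Real.exp_zero]
          apply Real.exp_le_exp.mpr
          have hl0 : 0 ≤ l := by rw [hl]; linarith
          nlinarith
        have h1 : (0:ℝ) < Real.exp (l * ((q - ε) * (h:ℝ) - (m:ℝ))) := Real.exp_pos _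
        rw [← hm, ← hh]; linarith
      · -- lower tail : m/h - q ≤ -ε
        have hnn : (q - ε) * (h:ℝ) - (m:ℝ) ≥ 0 := by
          have := (div_le_iff₀ hhR).mp (by linarith : (m:ℝ)/(h:ℝ) ≤ q - ε)
          linarith
        have h2 : (1:ℝ) ≤ Real.exp (l * ((q - ε) * (h:ℝ) - (m:ℝ))) := by
          rw [← Real.exp_zero]
          apply Real.exp_le_exp.mpr
          have hl0 : 0 ≤ l := by rw [hl]; linarith
          nlinarith
        have h1 : (0:ℝ) < Real.exp (l * ((m:ℝ) - (q + ε) * (h:ℝ))) := Real.exp_pos _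
        rw [← hm, ← hh]; linarith
  -- Step B
  have prodP_nonneg : ∀ ω : Fin n → Ω₀, 0 ≤ ∏ i, P (ω i) :=
    fun ω => Finset.prod_nonneg (fun i _ => hP (ω i))
  have stepB : ∑ ω ∈ Finset.univ.filter bad, ∏ i, P (ω i) ≤
      (∑ s, P s * g₁ s) ^ n + (∑ s, P s * g₂ s) ^ n := by
    calc ∑ ω ∈ Finset.univ.filter bad, ∏ i, P (ω i)
        ≤ ∑ ω ∈ Finset.univ.filter bad,
            (∏ i, P (ω i)) * ((∏ i, g₁ (ω i)) + (∏ i, g₂ (ω i))) := by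
          apply Finset.sum_le_sum
          intro ω hω
          have hb : bad ω := (Finset.mem_filter.mp hω).2
          nlinarith [stepA ω hb, prodP_nonneg ω]
      _ ≤ ∑ ω : Fin n → Ω₀,
            (∏ i, P (ω i)) * ((∏ i, g₁ (ω i)) + (∏ i, g₂ (ω i))) := by
          apply Finset.sum_le_sum_of_subset_of_nonneg (Finset.filter_subset _ _)
          intro ω _ _
          have h1 := (Real.exp_pos (l * (((Finset.univ.filter fun i => hit (ω i) ∧ mat (ω i)).card : ℝ) -
            (q + ε) * ((Finset.univ.filter fun i => hit (ω i)).card : ℝ)))).le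
          have h2 := (Real.exp_pos (l * ((q - ε) * ((Finset.univ.filter fun i => hit (ω i)).card : ℝ) -
            ((Finset.univ.filter fun i => hit (ω i) ∧ mat (ω i)).card : ℝ)))).le
          rw [← prod_g₁ ω] at h1
          rw [← prod_g₂ ω] at h2
          nlinarith [prodP_nonneg ω]
      _ = (∑ ω : Fin n → Ω₀, ∏ i, (fun s => P s * g₁ s) (ω i)) +
          (∑ ω : Fin n → Ω₀, ∏ i, (fun s => P s * g₂ s) (ω i)) := by
          rw [← Finset.sum_add_distrib]
          apply Finset.sum_congr rfl
          intro ω _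
          simp only [Finset.prod_mul_distrib]
          ring
      _ = (∑ s, P s * g₁ s) ^ n + (∑ s, P s * g₂ s) ^ n := by
          rw [← sum_pi_prod n (fun s => P s * g₁ s), ← sum_pi_prod n (fun s => P s * g₂ s)]
  -- Step C : per-sample sums
  have sumPg : ∀ (g : Ω₀ → ℝ) (a b : ℝ),
      (∀ s, g s = if hit s then (if mat s then a else b) else 1) →
      ∑ s, P s * g s = 1 - p + p * q * a + (p - p * q) * b := by
    intro g a b hg
    rw [← Finset.sum_filter_add_sum_filter_not Finset.univ hit (fun s => P s * g s)]
    have e2 : ∑ s ∈ Finset.univ.filter (fun s => ¬ hit s), P s * g s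
        = 1 - p := by
      have : ∀ s ∈ Finset.univ.filter (fun s => ¬ hit s), P s * g s = P s := by
        intro s hs
        rw [hg s, if_neg (Finset.mem_filter.mp hs).2, mul_one]
      rw [Finset.sum_congr rfl this]
      have := Finset.sum_filter_add_sum_filter_not Finset.univ hit P
      rw [hsum1, hp] at this
      linarith
    have e3 : ∑ s ∈ Finset.univ.filter hit, P s * g s
        = p * q * a + (p - p * q) * b := by
      rw [← Finset.sum_filter_add_sum_filter_not (Finset.univ.filter hit) mat
        (fun s => P s * g s)]
      have hmm : (Finset.univ.filter hit).filter mat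
          = Finset.univ.filter (fun s => hit s ∧ mat s) := by
        rw [Finset.filter_filter]
      have hmn : ∑ s ∈ (Finset.univ.filter hit).filter (fun s => ¬ mat s), P s
          = p - p * q := by
        have h4 := Finset.sum_filter_add_sum_filter_not (Finset.univ.filter hit) mat P
        rw [hp, hmm, hq] at h4
        linarith
      have c1 : ∑ s ∈ (Finset.univ.filter hit).filter mat, P s * g s
          = p * q * a := by
        have : ∀ s ∈ (Finset.univ.filter hit).filter mat, P s * g s = P s * a := by
          intro s hs
          simp only [Finset.mem_filter] at hs
          rw [hg s, if_pos hs.1.2, if_pos hs.2]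
        rw [Finset.sum_congr rfl this, ← Finset.sum_mul, hmm, hq]
      have c2 : ∑ s ∈ (Finset.univ.filter hit).filter (fun s => ¬ mat s), P s * g s
          = (p - p * q) * b := by
        have : ∀ s ∈ (Finset.univ.filter hit).filter (fun s => ¬ mat s),
            P s * g s = P s * b := by
          intro s hs
          simp only [Finset.mem_filter] at hs
          rw [hg s, if_pos hs.1.2, if_neg hs.2]
        rw [Finset.sum_congr rfl this, ← Finset.sum_mul, hmn]
      rw [c1, c2]
    rw [e2, e3]; ring
  -- the two concrete per-sample bounds
  have hle : ∀ x y : ℝ, (q * Real.exp x + (1 - q) * Real.exp y ≤ Real.exp (l ^ 2 / 8)) →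
      1 - p + p * q * (Real.exp x * Real.exp (-(l * ε)))
        + (p - p * q) * (Real.exp y * Real.exp (-(l * ε))) ≤ 1 - p * (1 - c) := by
    intro x y hxy
    have hE0 : 0 ≤ Real.exp (-(l * ε)) := (Real.exp_pos _).le
    have hEc : Real.exp (l ^ 2 / 8) * Real.exp (-(l * ε)) = c := by
      rw [← Real.exp_add, hc, hl]; congr 1; ring
    have h1 : (q * Real.exp x + (1 - q) * Real.exp y) * Real.exp (-(l * ε)) ≤ c := by
      rw [← hEc]
      exact mul_le_mul_of_nonneg_right hxy hE0
    nlinarith [mul_le_mul_of_nonneg_left h1 hp0]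
  have hg₁' : ∀ s, g₁ s = if hit s then
      (if mat s then Real.exp (l * (1 - q)) * Real.exp (-(l * ε))
        else Real.exp (-(l * q)) * Real.exp (-(l * ε))) else 1 := by
    intro s
    by_cases h1 : hit s <;> by_cases h2 : mat s <;>
      simp [hg₁, h1, h2, ← Real.exp_add] <;> (try (congr 1; ring))
  have hg₂' : ∀ s, g₂ s = if hit s then
      (if mat s then Real.exp (-l * (1 - q)) * Real.exp (-(l * ε))
        else Real.exp (-(-l * q)) * Real.exp (-(l * ε))) else 1 := by
    intro s
    by_cases h1 : hit s <;> by_cases h2 : mat s <;>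
      simp [hg₂, h1, h2, ← Real.exp_add] <;> (try (congr 1; ring))
  have key1 : ∑ s, P s * g₁ s ≤ 1 - p * (1 - c) := by
    rw [sumPg g₁ _ _ hg₁']
    exact hle _ _ (bern_mgf_le q hq0 hq1 l)
  have key2 : ∑ s, P s * g₂ s ≤ 1 - p * (1 - c) := by
    rw [sumPg g₂ _ _ hg₂']
    have hb := bern_mgf_le q hq0 hq1 (-l)
    have := hle (-l * (1 - q)) (-(-l * q)) (by
      convert hb using 3 <;> ring)
    convert this using 3 <;> ring
  have S1nonneg : 0 ≤ ∑ s, P s * g₁ s :=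
    Finset.sum_nonneg (fun s _ => mul_nonneg (hP s) (by rw [hg₁]; positivity))
  have S2nonneg : 0 ≤ ∑ s, P s * g₂ s :=
    Finset.sum_nonneg (fun s _ => mul_nonneg (hP s) (by rw [hg₂]; positivity))
  have Bnn : 0 ≤ 1 - p * (1 - c) := le_trans S1nonneg key1
  calc ∑ ω ∈ Finset.univ.filter bad, ∏ i, P (ω i)
      ≤ (∑ s, P s * g₁ s) ^ n + (∑ s, P s * g₂ s) ^ n := stepB
    _ ≤ (1 - p * (1 - c)) ^ n + (1 - p * (1 - c)) ^ n := by
        gcongr <;> assumption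
    _ = 2 * (1 - p * (1 - c)) ^ n := by ring



lemma dot_basis {S : Type*} [Fintype S] [DecidableEq S] (v : Matrix S S ℂ) (y : S) :
    dotProduct (star (fun x => if x = y then (1:ℂ) else 0))
      (v.mulVec (fun x => if x = y then (1:ℂ) else 0)) = v y y := by
  simp [dotProduct, Matrix.mulVec, apply_ite, mul_comm]

lemma res_mer {N : ℕ} (A : Finset (Fin N)) (a : {j // j ∈ A} → Fin 2)
    (b : {j // j ∉ A} → Fin 2) : res A (mer A a b) = a := by
  funext j; simp [res, mer, j.2]

lemma mer_res {N : ℕ} (A : Finset (Fin N)) (y : Fin N → Fin 2)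
    (yA : {j // j ∈ A} → Fin 2) (h : res A y = yA) :
    mer A yA (fun j => y j.1) = y := by
  funext j
  by_cases hj : j ∈ A
  · simp [mer, hj, ← h, res]
  · simp [mer, hj]

lemma sum_res_eq {N : ℕ} (A : Finset (Fin N)) (yA : {j // j ∈ A} → Fin 2)
    (f : (Fin N → Fin 2) → ℝ) :
    ∑ y ∈ Finset.univ.filter (fun y => res A y = yA), f y
      = ∑ b : {j // j ∉ A} → Fin 2, f (mer A yA b) := by
  classical
  apply Finset.sum_nbij' (i := fun y => (fun j => y j.1 : {j // j ∉ A} → Fin 2))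
    (j := fun b => mer A yA b)
  · intro y hy; exact Finset.mem_univ _
  · intro b hb
    simp [res_mer]
  · intro y hy
    exact mer_res A y yA (Finset.mem_filter.mp hy).2
  · intro b hb
    funext j; simp [mer, j.2]
  · intro y hy
    rw [mer_res A y yA (Finset.mem_filter.mp hy).2]

lemma sum_res_eqC {N : ℕ} (A : Finset (Fin N)) (yA : {j // j ∈ A} → Fin 2)
    (f : (Fin N → Fin 2) → ℂ) :
    ∑ y ∈ Finset.univ.filter (fun y => res A y = yA), f y
      = ∑ b : {j // j ∉ A} → Fin 2, f (mer A yA b) := by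
  classical
  apply Finset.sum_nbij' (i := fun y => (fun j => y j.1 : {j // j ∉ A} → Fin 2))
    (j := fun b => mer A yA b)
  · intro y hy; exact Finset.mem_univ _
  · intro b hb
    simp [res_mer]
  · intro y hy
    exact mer_res A y yA (Finset.mem_filter.mp hy).2
  · intro b hb
    funext j; simp [mer, j.2]
  · intro y hy
    rw [mer_res A y yA (Finset.mem_filter.mp hy).2]

lemma card_compl_fun {N : ℕ} (A : Finset (Fin N)) :
    Fintype.card ({j // j ∉ A} → Fin 2) = 2 ^ (N - A.card) := by
  rw [Fintype.card_fun, Fintype.card_fin]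
  congr 1
  rw [Fintype.card_subtype_compl, Fintype.card_fin]
  congr 1
  exact Fintype.card_coe A


section
variable {N : ℕ} (M : (Fin N → Fin 2) → Matrix (Fin N → Fin 2) (Fin N → Fin 2) ℂ)

lemma born_eq (y x : Fin N → Fin 2) : bornC M y x = ((M x) y y).re := by
  unfold bornC cState
  rw [dot_basis]

lemma born_nonneg (hpsd : ∀ x, (M x).PosSemidef) (y x : Fin N → Fin 2) :
    0 ≤ bornC M y x := by
  have := (hpsd x).dotProduct_mulVec_nonneg (cState y)
  have h := (Complex.le_def.mp this).1
  simpa [bornC] using h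

lemma born_sum (hsum : ∑ x, M x = 1) (y : Fin N → Fin 2) :
    ∑ x, bornC M y x = 1 := by
  simp only [born_eq]
  rw [← Complex.re_sum]
  have : ∑ x, M x y y = (1 : Matrix (Fin N → Fin 2) (Fin N → Fin 2) ℂ) y y := by
    rw [← hsum]; simp [Matrix.sum_apply]
  rw [this, Matrix.one_apply_eq, Complex.one_re]

lemma redElem_eq (A : Finset (Fin N)) (xA yA : {j // j ∈ A} → Fin 2) :
    redElemC M A xA yA = (1 / (2:ℝ) ^ (N - A.card)) *
      ∑ xb : {j // j ∉ A} → Fin 2, ∑ b : {j // j ∉ A} → Fin 2,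
        (M (mer A xA xb) (mer A yA b) (mer A yA b)).re := by
  unfold redElemC cStateA
  rw [dot_basis]
  show ((1 / (2 : ℂ) ^ (N - A.card)) * ∑ xb, ∑ b, _).re = _
  rw [show (1 / (2 : ℂ) ^ (N - A.card)) = ((1 / (2:ℝ) ^ (N - A.card) : ℝ) : ℂ) by push_cast; ring,
    Complex.re_ofReal_mul]
  rw [Complex.re_sum]
  exact congrArg _ (Finset.sum_congr rfl fun xb _ => (Complex.re_sum _ _))
end

section
variable {N : ℕ} (M : (Fin N → Fin 2) → Matrix (Fin N → Fin 2) (Fin N → Fin 2) ℂ)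

open Finset in
lemma hit_sum (hpsd : ∀ x, (M x).PosSemidef) (hsum : ∑ x, M x = 1) (hk : True)
    (A : Finset (Fin N)) (yA : {j // j ∈ A} → Fin 2) :
    ∑ s ∈ Finset.univ.filter
        (fun s : (Fin N → Fin 2) × (Fin N → Fin 2) => res A s.1 = yA),
      (1 / (2:ℝ) ^ N) * bornC M s.1 s.2
      = (2:ℝ) ^ (N - A.card) / 2 ^ N := by
  classical
  have hprod : Finset.univ.filter
      (fun s : (Fin N → Fin 2) × (Fin N → Fin 2) => res A s.1 = yA)
      = (Finset.univ.filter (fun y => res A y = yA)) ×ˢ Finset.univ := by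
    ext ⟨y, x⟩; simp
  rw [hprod, Finset.sum_product]
  have : ∀ y ∈ Finset.univ.filter (fun y => res A y = yA),
      ∑ x, (1 / (2:ℝ) ^ N) * bornC M y x = 1 / (2:ℝ) ^ N := by
    intro y _
    rw [← Finset.mul_sum, born_sum M hsum, mul_one]
  rw [Finset.sum_congr rfl this, sum_res_eq]
  simp [card_compl_fun]
  ring

open Finset in
lemma joint_sum (hsum : ∑ x, M x = 1)
    (A : Finset (Fin N)) (xA yA : {j // j ∈ A} → Fin 2) :
    ∑ s ∈ Finset.univ.filter
        (fun s : (Fin N → Fin 2) × (Fin N → Fin 2) => res A s.1 = yA ∧ res A s.2 = xA),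
      (1 / (2:ℝ) ^ N) * bornC M s.1 s.2
      = ((2:ℝ) ^ (N - A.card) / 2 ^ N) * redElemC M A xA yA := by
  classical
  have hprod : Finset.univ.filter
      (fun s : (Fin N → Fin 2) × (Fin N → Fin 2) => res A s.1 = yA ∧ res A s.2 = xA)
      = (Finset.univ.filter (fun y => res A y = yA)) ×ˢ
          (Finset.univ.filter (fun x => res A x = xA)) := by
    ext ⟨y, x⟩; simp
  rw [hprod, Finset.sum_product, sum_res_eq]
  have step : ∀ b : {j // j ∉ A} → Fin 2,
      ∑ x ∈ Finset.univ.filter (fun x => res A x = xA),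
        (1 / (2:ℝ) ^ N) * bornC M (mer A yA b) x
      = ∑ xb : {j // j ∉ A} → Fin 2,
          (1 / (2:ℝ) ^ N) * (M (mer A xA xb) (mer A yA b) (mer A yA b)).re := by
    intro b
    rw [sum_res_eq]
    exact Finset.sum_congr rfl fun xb _ => by rw [born_eq]
  rw [Finset.sum_congr rfl fun b _ => step b, Finset.sum_comm, redElem_eq]
  simp only [← Finset.mul_sum]
  rw [← mul_assoc]
  congr 1
  have h2 : ((2:ℝ)) ^ (N - A.card) ≠ 0 := by positivity
  have h3 : ((2:ℝ)) ^ N ≠ 0 := by positivity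
  field_simp

end

open Finset in
lemma union_bound {Ω : Type*} [Fintype Ω] {ι : Type*} (T : Finset ι)
    (w : Ω → ℝ) (hw : ∀ ω, 0 ≤ w ω) (pa : ι → Ω → Prop) [∀ a, DecidablePred (pa a)]
    (p : Ω → Prop) [DecidablePred p] (himp : ∀ ω, p ω → ∃ a ∈ T, pa a ω) :
    ∑ ω ∈ Finset.univ.filter p, w ω ≤ ∑ a ∈ T, ∑ ω ∈ Finset.univ.filter (pa a), w ω := by
  have key : ∀ ω ∈ Finset.univ.filter p, w ω ≤ ∑ a ∈ T, (if pa a ω then w ω else 0) := by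
    intro ω hω
    obtain ⟨a, haT, hpa⟩ := himp ω (Finset.mem_filter.mp hω).2
    calc w ω = (if pa a ω then w ω else 0) := by rw [if_pos hpa]
      _ ≤ _ := Finset.single_le_sum
          (f := fun a => if pa a ω then w ω else 0)
          (fun a _ => by split <;> simp [hw ω]) haT
  calc ∑ ω ∈ Finset.univ.filter p, w ω
      ≤ ∑ ω ∈ Finset.univ.filter p, ∑ a ∈ T, (if pa a ω then w ω else 0) :=
        Finset.sum_le_sum key
    _ ≤ ∑ ω : Ω, ∑ a ∈ T, (if pa a ω then w ω else 0) := by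
        apply Finset.sum_le_sum_of_subset_of_nonneg (Finset.filter_subset _ _)
        intro ω _ _
        exact Finset.sum_nonneg fun a _ => by split <;> simp [hw ω]
    _ = ∑ a ∈ T, ∑ ω : Ω, (if pa a ω then w ω else 0) := Finset.sum_comm
    _ = ∑ a ∈ T, ∑ ω ∈ Finset.univ.filter (pa a), w ω := by
        exact Finset.sum_congr rfl fun a _ => (Finset.sum_filter _ _).symm

end AuxProofs

/-- DDOT sample complexity: for a POVM `M` on `N` qubits, inputs drawn
uniformly i.i.d. from `{0,1}^N` and Born-rule outcomes, the probability that for some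
subset `A` of size `k` and some `x_A` the estimator deviates by `≥ ε` is at most
`2 · 2^k · C(N,k) · exp(−(1 − e^{−2ε²}) N_Mes / 2^k)`; consequently
`N_Mes ≥ (2^k/(1 − e^{−2ε²}))[(k+1)log 2 + log C(N,k) + log(1/δ)]` circuits suffice for
accuracy `ε` with probability `≥ 1 − δ`. -/

theorem ddot_sample_complexity (N k NMes : ℕ) (hk : k ≤ N)
    (M : (Fin N → Fin 2) → Matrix (Fin N → Fin 2) (Fin N → Fin 2) ℂ)
    (hpsd : ∀ x, (M x).PosSemidef) (hsum : ∑ x, M x = 1)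
    (ytilde : Fin N → Fin 2) (ε : ℝ) (hε : 0 < ε) :
    badProbC N k NMes M ytilde ε ≤
        2 * 2 ^ k * (N.choose k : ℝ) *
          Real.exp (-(1 - Real.exp (-2 * ε ^ 2)) * NMes / 2 ^ k) ∧
      ∀ δ : ℝ, 0 < δ →
        (NMes : ℝ) ≥ ((2 : ℝ) ^ k / (1 - Real.exp (-2 * ε ^ 2))) *
            (((k : ℝ) + 1) * Real.log 2 + Real.log (N.choose k : ℝ) + Real.log (1 / δ)) →
        badProbC N k NMes M ytilde ε ≤ δ := by
  classical
  set c : ℝ := Real.exp (-2 * ε ^ 2) with hcdef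
  have hc0 : 0 < c := Real.exp_pos _
  have hc1 : c < 1 := by
    rw [hcdef]
    apply Real.exp_lt_one_iff.mpr
    nlinarith
  set P : (Fin N → Fin 2) × (Fin N → Fin 2) → ℝ :=
    fun s => (1 / (2:ℝ) ^ N) * bornC M s.1 s.2 with hPdef
  have hP : ∀ s, 0 ≤ P s := fun s => mul_nonneg (by positivity) (born_nonneg M hpsd _ _)
  have hP1 : ∑ s, P s = 1 := by
    rw [Fintype.sum_prod_type]
    have h1 : ∀ y, ∑ x, P (y, x) = 1 / (2:ℝ) ^ N := by
      intro y
      rw [← Finset.mul_sum, born_sum M hsum, mul_one]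
    rw [Finset.sum_congr rfl (fun y _ => h1 y), Finset.sum_const, Finset.card_univ]
    have : Fintype.card (Fin N → Fin 2) = 2 ^ N := by
      rw [Fintype.card_fun, Fintype.card_fin, Fintype.card_fin]
    rw [this, nsmul_eq_mul]
    push_cast
    field_simp
  set pp : ℝ := ((2:ℝ) ^ k)⁻¹ with hppdef
  have hpp0 : 0 < pp := by positivity
  have hpp1 : pp ≤ 1 := by
    rw [hppdef]
    rw [inv_le_one_iff₀]
    right
    exact one_le_pow₀ (by norm_num)
  -- the per-pair bound
  have pair_bound : ∀ A : Finset (Fin N), A.card = k → ∀ xA : {j // j ∈ A} → Fin 2,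
      ∑ ω ∈ Finset.univ.filter (fun ω : Fin NMes → (Fin N → Fin 2) × (Fin N → Fin 2) =>
          |estimC A xA (res A ytilde) ω - redElemC M A xA (res A ytilde)| ≥ ε),
        wgtC M ω ≤ 2 * (1 - pp * (1 - c)) ^ NMes := by
    intro A hA xA
    set yA := res A ytilde with hyA
    set q : ℝ := redElemC M A xA yA with hqdef
    have hpA : ((2:ℝ) ^ (N - A.card) / 2 ^ N) = pp := by
      rw [hA, hppdef, pow_sub₀ (2:ℝ) (by norm_num) hk]
      field_simp
    have hp : ∑ s ∈ Finset.univ.filter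
        (fun s : (Fin N → Fin 2) × (Fin N → Fin 2) => res A s.1 = yA), P s = pp := by
      rw [← hpA]
      exact hit_sum M hpsd hsum trivial A yA
    have hq : ∑ s ∈ Finset.univ.filter
        (fun s : (Fin N → Fin 2) × (Fin N → Fin 2) => res A s.1 = yA ∧ res A s.2 = xA),
        P s = pp * q := by
      rw [← hpA]
      exact joint_sum M hsum A xA yA
    have hsub : Finset.univ.filter
        (fun s : (Fin N → Fin 2) × (Fin N → Fin 2) => res A s.1 = yA ∧ res A s.2 = xA)
        ⊆ Finset.univ.filter
        (fun s : (Fin N → Fin 2) × (Fin N → Fin 2) => res A s.1 = yA) := by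
      intro s hs
      simp only [Finset.mem_filter] at hs ⊢
      exact ⟨hs.1, hs.2.1⟩
    have hq0 : 0 ≤ q := by
      have h1 : 0 ≤ pp * q := hq ▸ Finset.sum_nonneg (fun s _ => hP s)
      nlinarith
    have hq1 : q ≤ 1 := by
      have h1 : pp * q ≤ pp := by
        rw [← hq, ← hp]
        exact Finset.sum_le_sum_of_subset_of_nonneg hsub (fun s _ _ => hP s)
      nlinarith
    have hcore := core_bound P hP (fun s => res A s.1 = yA) (fun s => res A s.2 = xA)
      pp q ε hε hpp0.le hP1 hp hq hq0 hq1 NMes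
      (fun ω => |estimC A xA yA ω - q| ≥ ε)
      (fun ω hω => hω)
    calc ∑ ω ∈ Finset.univ.filter (fun ω : Fin NMes → (Fin N → Fin 2) × (Fin N → Fin 2) =>
            |estimC A xA (res A ytilde) ω - redElemC M A xA (res A ytilde)| ≥ ε),
          wgtC M ω
        = ∑ ω ∈ Finset.univ.filter
            (fun ω : Fin NMes → (Fin N → Fin 2) × (Fin N → Fin 2) =>
              |estimC A xA yA ω - q| ≥ ε), ∏ i, P (ω i) := rfl
      _ ≤ 2 * (1 - pp * (1 - c)) ^ NMes := hcore
  have hBnn : (0:ℝ) ≤ 1 - pp * (1 - c) := by nlinarith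
  -- union bound over A and xA
  have main : badProbC N k NMes M ytilde ε ≤
      2 * 2 ^ k * (N.choose k : ℝ) * Real.exp (-(1 - c) * NMes / 2 ^ k) := by
    have step1 : badProbC N k NMes M ytilde ε ≤
        ∑ A ∈ Finset.powersetCard k (Finset.univ : Finset (Fin N)),
          ∑ ω ∈ Finset.univ.filter
            (fun ω : Fin NMes → (Fin N → Fin 2) × (Fin N → Fin 2) =>
              ∃ xA : {j // j ∈ A} → Fin 2,
                |estimC A xA (res A ytilde) ω - redElemC M A xA (res A ytilde)| ≥ ε),
            wgtC M ω := by
      apply union_bound _ _ (fun ω => Finset.prod_nonneg fun i _ => hP (ω i))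
      intro ω hω
      obtain ⟨A, hA, hxA⟩ := hω
      exact ⟨A, Finset.mem_powersetCard_univ.mpr hA, hxA⟩
    have step2 : ∀ A ∈ Finset.powersetCard k (Finset.univ : Finset (Fin N)),
        ∑ ω ∈ Finset.univ.filter
            (fun ω : Fin NMes → (Fin N → Fin 2) × (Fin N → Fin 2) =>
              ∃ xA : {j // j ∈ A} → Fin 2,
                |estimC A xA (res A ytilde) ω - redElemC M A xA (res A ytilde)| ≥ ε),
          wgtC M ω ≤ 2 ^ k * (2 * (1 - pp * (1 - c)) ^ NMes) := by
      intro A hA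
      have hAk : A.card = k := Finset.mem_powersetCard_univ.mp hA
      calc ∑ ω ∈ Finset.univ.filter
            (fun ω : Fin NMes → (Fin N → Fin 2) × (Fin N → Fin 2) =>
              ∃ xA : {j // j ∈ A} → Fin 2,
                |estimC A xA (res A ytilde) ω - redElemC M A xA (res A ytilde)| ≥ ε),
            wgtC M ω
          ≤ ∑ xA : {j // j ∈ A} → Fin 2, ∑ ω ∈ Finset.univ.filter
              (fun ω : Fin NMes → (Fin N → Fin 2) × (Fin N → Fin 2) =>
                |estimC A xA (res A ytilde) ω - redElemC M A xA (res A ytilde)| ≥ ε),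
              wgtC M ω := by
            apply union_bound _ _ (fun ω => Finset.prod_nonneg fun i _ => hP (ω i))
            intro ω hω
            obtain ⟨xA, hxA⟩ := hω
            exact ⟨xA, Finset.mem_univ _, hxA⟩
        _ ≤ ∑ xA : {j // j ∈ A} → Fin 2, 2 * (1 - pp * (1 - c)) ^ NMes :=
            Finset.sum_le_sum fun xA _ => pair_bound A hAk xA
        _ = 2 ^ k * (2 * (1 - pp * (1 - c)) ^ NMes) := by
            rw [Finset.sum_const, Finset.card_univ, nsmul_eq_mul]
            congr 2
            rw [Fintype.card_fun, Fintype.card_fin, Fintype.card_coe, hAk]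
            push_cast
            ring
    have step3 : (1 - pp * (1 - c)) ^ NMes ≤ Real.exp (-(1 - c) * NMes / 2 ^ k) := by
      have h1 : 1 - pp * (1 - c) ≤ Real.exp (-(pp * (1 - c))) := by
        have := Real.add_one_le_exp (-(pp * (1 - c)))
        linarith
      calc (1 - pp * (1 - c)) ^ NMes ≤ (Real.exp (-(pp * (1 - c)))) ^ NMes :=
            pow_le_pow_left₀ hBnn h1 NMes
        _ = Real.exp (-(1 - c) * NMes / 2 ^ k) := by
            rw [← Real.exp_nat_mul]
            congr 1
            rw [hppdef]
            field_simp
    calc badProbC N k NMes M ytilde ε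
        ≤ ∑ A ∈ Finset.powersetCard k (Finset.univ : Finset (Fin N)),
            ∑ ω ∈ Finset.univ.filter
              (fun ω : Fin NMes → (Fin N → Fin 2) × (Fin N → Fin 2) =>
                ∃ xA : {j // j ∈ A} → Fin 2,
                  |estimC A xA (res A ytilde) ω - redElemC M A xA (res A ytilde)| ≥ ε),
              wgtC M ω := step1
      _ ≤ ∑ _A ∈ Finset.powersetCard k (Finset.univ : Finset (Fin N)),
            (2:ℝ) ^ k * (2 * (1 - pp * (1 - c)) ^ NMes) := Finset.sum_le_sum step2
      _ = (N.choose k : ℝ) * ((2:ℝ) ^ k * (2 * (1 - pp * (1 - c)) ^ NMes)) := by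
          rw [Finset.sum_const, nsmul_eq_mul, Finset.card_powersetCard, Finset.card_univ,
            Fintype.card_fin]
      _ ≤ (N.choose k : ℝ) * ((2:ℝ) ^ k * (2 * Real.exp (-(1 - c) * NMes / 2 ^ k))) := by
          have := step3
          gcongr
      _ = 2 * 2 ^ k * (N.choose k : ℝ) * Real.exp (-(1 - c) * NMes / 2 ^ k) := by ring
  refine ⟨main, ?_⟩
  intro δ hδ hN
  set L : ℝ := ((k : ℝ) + 1) * Real.log 2 + Real.log (N.choose k : ℝ) + Real.log (1 / δ)
    with hLdef
  have hchoosepos : 0 < (N.choose k : ℝ) := by exact_mod_cast Nat.choose_pos hk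
  have h2k : (0:ℝ) < 2 ^ k := by positivity
  have ht : 0 < 1 - c := by linarith
  have hexp : Real.exp (-(1 - c) * NMes / 2 ^ k) ≤ Real.exp (-L) := by
    apply Real.exp_le_exp.mpr
    rw [neg_mul, neg_div, neg_le_neg_iff]
    rw [ge_iff_le, div_mul_eq_mul_div, div_le_iff₀ ht] at hN
    rw [le_div_iff₀ h2k]
    nlinarith
  have hexpL : Real.exp (-L) = ((2:ℝ) ^ (k + 1))⁻¹ * ((N.choose k : ℝ))⁻¹ * δ := by
    rw [hLdef, show -(((k : ℝ) + 1) * Real.log 2 + Real.log (N.choose k : ℝ) +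
        Real.log (1 / δ)) = (-(((k : ℝ) + 1) * Real.log 2)) + (-(Real.log (N.choose k : ℝ)))
        + (-(Real.log (1 / δ))) by ring, Real.exp_add, Real.exp_add]
    congr 1
    · congr 1
      · rw [show ((k : ℝ) + 1) * Real.log 2 = Real.log ((2:ℝ) ^ (k + 1)) by
            rw [Real.log_pow]; push_cast; ring,
          Real.exp_neg, Real.exp_log (by positivity)]
      · rw [Real.exp_neg, Real.exp_log hchoosepos]
    · rw [show -Real.log (1 / δ) = Real.log δ by rw [one_div, Real.log_inv]; ring,
        Real.exp_log hδ]
  calc badProbC N k NMes M ytilde ε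
      ≤ 2 * 2 ^ k * (N.choose k : ℝ) * Real.exp (-(1 - c) * NMes / 2 ^ k) := main
    _ ≤ 2 * 2 ^ k * (N.choose k : ℝ) * Real.exp (-L) := by
        have : (0:ℝ) ≤ 2 * 2 ^ k * (N.choose k : ℝ) := by positivity
        exact mul_le_mul_of_nonneg_left hexp this
    _ = δ := by
        rw [hexpL, pow_succ]
        field_simp
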